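/- Let F be a field, S = F[[X, Z, U]] the formal power series ring in three variables, R = S/(Z^2, ZU, XZ - U^3), and let m = (x, z, u) be the maximal ideal of R generated by the images x, z, u of X, Z, U. Then z·m ⊆ m^3 and z ∉ m^2; consequently z ∈ ~(m^2) \ m^2 and m^2 is not Ratliff-Rush closed (while m itself, being the maximal ideal hence prime, is Ratliff-Rush closed). -/

import Mathlib

/-- The Ratliff-Rush closure of the power `I^n`:  `⋃_{k≥0} (I^{n+k} : I^k)`. -/
noncomputable def rrPow {R : Type*} [CommRing R] (I : Ideal R) (n : ℕ) : Ideal R :=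
  ⨆ k : ℕ, (I ^ (n + k)).colon ((I ^ k : Ideal R) : Set R)

open MvPowerSeries

section Aux

variable (F : Type*) [Field F]

theorem coeff_single_one_mul (r f : MvPowerSeries (Fin 3) F) :
    coeff (Finsupp.single 1 1) (r * f) =
      coeff 0 r * coeff (Finsupp.single 1 1) f
        + coeff (Finsupp.single 1 1) r * coeff 0 f := by
  rw [coeff_mul, Finsupp.antidiagonal_single, Finset.sum_map,
    show (Finset.HasAntidiagonal.antidiagonal 1 : Finset (ℕ×ℕ)) = {(0,1),(1,0)} from rfl]
  simp

/-- The ideal of power series whose constant coefficient and coefficient of the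
monomial `Z` (i.e. `Finsupp.single 1 1`) both vanish. -/
def Jideal : Ideal (MvPowerSeries (Fin 3) F) where
  carrier := {f | coeff 0 f = 0 ∧ coeff (Finsupp.single 1 1) f = 0}
  add_mem' := by
    rintro a b ⟨ha0, ha1⟩ ⟨hb0, hb1⟩
    constructor
    · show coeff 0 (a + b) = 0
      rw [map_add, ha0, hb0, add_zero]
    · show coeff (Finsupp.single 1 1) (a + b) = 0
      rw [map_add, ha1, hb1, add_zero]
  zero_mem' := by simp
  smul_mem' := by
    rintro r f ⟨hf0, hf1⟩
    constructor
    · show coeff 0 (r * f) = 0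
      simp only [coeff_zero_eq_constantCoeff, map_mul] at hf0 ⊢
      rw [hf0, mul_zero]
    · show coeff (Finsupp.single 1 1) (r * f) = 0
      rw [coeff_single_one_mul, hf1, hf0, mul_zero, mul_zero, add_zero]

theorem mul_mem_Jideal {f g : MvPowerSeries (Fin 3) F}
    (hf : constantCoeff f = 0) (hg : constantCoeff g = 0) :
    f * g ∈ Jideal F := by
  rw [← coeff_zero_eq_constantCoeff_apply] at hf hg
  constructor
  · show coeff 0 (f * g) = 0
    simp only [coeff_zero_eq_constantCoeff, map_mul] at hf ⊢
    rw [hf, zero_mul]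
  · show coeff (Finsupp.single 1 1) (f * g) = 0
    rw [coeff_single_one_mul, hf, hg, zero_mul, mul_zero, add_zero]

/-- The underlying function of the "set Z = U = 0" projection. -/
noncomputable def psiFun (f : MvPowerSeries (Fin 3) F) : MvPowerSeries (Fin 3) F :=
  fun d => if d 1 = 0 ∧ d 2 = 0 then coeff d f else 0

theorem coeff_psiFun (f : MvPowerSeries (Fin 3) F) (d : Fin 3 →₀ ℕ) :
    coeff d (psiFun F f) = if d 1 = 0 ∧ d 2 = 0 then coeff d f else 0 := rfl

/-- The "set Z = U = 0" projection, as a ring homomorphism. -/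
noncomputable def psi : MvPowerSeries (Fin 3) F →+* MvPowerSeries (Fin 3) F where
  toFun := psiFun F
  map_one' := by
    ext d
    rw [coeff_psiFun]
    by_cases h : d 1 = 0 ∧ d 2 = 0
    · rw [if_pos h]
    · rw [if_neg h, coeff_one, if_neg]
      rintro rfl
      simp at h
  map_mul' f g := by
    ext d
    rw [coeff_psiFun, coeff_mul]
    by_cases h : d 1 = 0 ∧ d 2 = 0
    · rw [if_pos h, coeff_mul]
      refine Finset.sum_congr rfl ?_
      rintro ⟨a, b⟩ hab
      have hab' : a + b = d := Finset.HasAntidiagonal.mem_antidiagonal.mp hab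
      have h1 : a 1 + b 1 = d 1 := by rw [← Finsupp.add_apply, hab']
      have h2 : a 2 + b 2 = d 2 := by rw [← Finsupp.add_apply, hab']
      rw [h.1] at h1; rw [h.2] at h2
      show _ = coeff a (psiFun F f) * coeff b (psiFun F g)
      rw [coeff_psiFun, coeff_psiFun, if_pos ⟨by omega, by omega⟩, if_pos ⟨by omega, by omega⟩]
    · rw [if_neg h]
      refine (Finset.sum_eq_zero ?_).symm
      rintro ⟨a, b⟩ hab
      have hab' : a + b = d := by simpa using hab
      have h1 : a 1 + b 1 = d 1 := by rw [← Finsupp.add_apply, hab']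
      have h2 : a 2 + b 2 = d 2 := by rw [← Finsupp.add_apply, hab']
      show coeff a (psiFun F f) * coeff b (psiFun F g) = 0
      rw [coeff_psiFun, coeff_psiFun]
      rcases Decidable.not_and_iff_or_not.mp h with hd | hd <;>
      · by_cases haa : a 1 = 0 ∧ a 2 = 0
        · rw [if_neg (show ¬(b 1 = 0 ∧ b 2 = 0) by omega), mul_zero]
        · rw [if_neg haa, zero_mul]
  map_zero' := by
    ext d
    rw [coeff_psiFun]
    simp
  map_add' f g := by
    ext d
    rw [map_add, coeff_psiFun, coeff_psiFun, coeff_psiFun, map_add]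
    by_cases h : d 1 = 0 ∧ d 2 = 0 <;> simp [h]

theorem psi_X0 : psi F (X 0) = X 0 := by
  ext d
  show coeff d (psiFun F (X 0)) = _
  rw [coeff_psiFun]
  by_cases h : d 1 = 0 ∧ d 2 = 0
  · rw [if_pos h]
  · rw [if_neg h, coeff_X, if_neg]
    rintro rfl
    simp at h

theorem psi_X1 : psi F (X 1) = 0 := by
  ext d
  show coeff d (psiFun F (X 1)) = _
  rw [coeff_psiFun, map_zero]
  by_cases h : d 1 = 0 ∧ d 2 = 0
  · rw [if_pos h, coeff_X, if_neg]
    rintro rfl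
    simp at h
  · rw [if_neg h]

theorem psi_X2 : psi F (X 2) = 0 := by
  ext d
  show coeff d (psiFun F (X 2)) = _
  rw [coeff_psiFun, map_zero]
  by_cases h : d 1 = 0 ∧ d 2 = 0
  · rw [if_pos h, coeff_X, if_neg]
    rintro rfl
    simp at h
  · rw [if_neg h]

/-- Every power series with vanishing constant coefficient lies in `(X₀, X₁, X₂)`. -/
theorem mem_span_X_of_constantCoeff_eq_zero {f : MvPowerSeries (Fin 3) F}
    (hf : constantCoeff f = 0) :
    f ∈ Ideal.span {(X 0 : MvPowerSeries (Fin 3) F), X 1, X 2} := by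
  set g0 : MvPowerSeries (Fin 3) F := fun d => if d 0 ≠ 0 then coeff d f else 0 with hg0
  set g1 : MvPowerSeries (Fin 3) F :=
    fun d => if d 0 = 0 ∧ d 1 ≠ 0 then coeff d f else 0 with hg1
  set g2 : MvPowerSeries (Fin 3) F :=
    fun d => if d 0 = 0 ∧ d 1 = 0 ∧ d 2 ≠ 0 then coeff d f else 0 with hg2
  have hsum : f = g0 + g1 + g2 := by
    ext d
    rw [map_add, map_add]
    show coeff d f = (if d 0 ≠ 0 then coeff d f else 0)
      + (if d 0 = 0 ∧ d 1 ≠ 0 then coeff d f else 0)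
      + (if d 0 = 0 ∧ d 1 = 0 ∧ d 2 ≠ 0 then coeff d f else 0)
    by_cases h0 : d 0 = 0
    · by_cases h1 : d 1 = 0
      · by_cases h2 : d 2 = 0
        · have hd : d = 0 := by
            ext i
            fin_cases i <;> assumption
          subst hd
          rw [coeff_zero_eq_constantCoeff, hf]
          simp
        · simp [h0, h1, h2]
      · simp [h0, h1]
    · simp [h0]
  have hd0 : (X 0 : MvPowerSeries (Fin 3) F) ∣ g0 := by
    rw [X_dvd_iff]
    intro d hd
    show (if d 0 ≠ 0 then coeff d f else 0) = 0
    simp [hd]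
  have hd1 : (X 1 : MvPowerSeries (Fin 3) F) ∣ g1 := by
    rw [X_dvd_iff]
    intro d hd
    show (if d 0 = 0 ∧ d 1 ≠ 0 then coeff d f else 0) = 0
    simp [hd]
  have hd2 : (X 2 : MvPowerSeries (Fin 3) F) ∣ g2 := by
    rw [X_dvd_iff]
    intro d hd
    show (if d 0 = 0 ∧ d 1 = 0 ∧ d 2 ≠ 0 then coeff d f else 0) = 0
    simp [hd]
  rw [hsum]
  have sp : ∀ s : MvPowerSeries (Fin 3) F, s ∈ ({X 0, X 1, X 2} :
      Set (MvPowerSeries (Fin 3) F)) → ∀ t, s ∣ t →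
      t ∈ Ideal.span {(X 0 : MvPowerSeries (Fin 3) F), X 1, X 2} := by
    intro s hs t ht
    exact Ideal.span_mono (Set.singleton_subset_iff.mpr hs)
      (Ideal.mem_span_singleton.mpr ht)
  refine Ideal.add_mem _ (Ideal.add_mem _ ?_ ?_) ?_
  · exact sp _ (by simp) _ hd0
  · exact sp _ (by simp) _ hd1
  · exact sp _ (by simp) _ hd2
end Aux

set_option maxHeartbeats 1000000 in
set_option synthInstance.maxHeartbeats 400000 in
/-- Let `R = F[[X,Z,U]]/(Z^2, ZU, XZ - U^3)` with maximal ideal `m = (x,z,u)`.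
Then `z·m ⊆ m^3` and `z ∉ m^2`; consequently `z ∈ ~(m^2) \ m^2`, so `m^2` is not
Ratliff-Rush closed, while `m` itself is Ratliff-Rush closed. -/
theorem stmt_9 (F : Type*) [Field F]
    (X Z U : MvPowerSeries (Fin 3) F)
    (hX : X = MvPowerSeries.X 0) (hZ : Z = MvPowerSeries.X 1) (hU : U = MvPowerSeries.X 2)
    (Q : Ideal (MvPowerSeries (Fin 3) F))
    (hQ : Q = Ideal.span {Z ^ 2, Z * U, X * Z - U ^ 3})
    (x z u : MvPowerSeries (Fin 3) F ⧸ Q)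
    (hx : x = Ideal.Quotient.mk Q X) (hz : z = Ideal.Quotient.mk Q Z)
    (hu : u = Ideal.Quotient.mk Q U)
    (m : Ideal (MvPowerSeries (Fin 3) F ⧸ Q))
    (hm : m = Ideal.span {x, z, u}) :
    (∀ f ∈ m, z * f ∈ m ^ 3) ∧
    z ∉ m ^ 2 ∧
    z ∈ rrPow m 2 ∧
    rrPow m 2 ≠ m ^ 2 ∧
    rrPow m 1 = m := by
  have hxm : x ∈ m := hm ▸ Ideal.subset_span (by simp)
  have hzm : z ∈ m := hm ▸ Ideal.subset_span (by simp)
  have hum : u ∈ m := hm ▸ Ideal.subset_span (by simp)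
  -- relations in the quotient
  have hzz : z * z = 0 := by
    rw [hz, ← map_mul, Ideal.Quotient.eq_zero_iff_mem, hQ, ← pow_two]
    exact Ideal.subset_span (by simp)
  have hzu : z * u = 0 := by
    rw [hz, hu, ← map_mul, Ideal.Quotient.eq_zero_iff_mem, hQ]
    exact Ideal.subset_span (by simp)
  have hzx : z * x = u ^ 3 := by
    rw [hz, hx, hu, ← map_mul, ← map_pow, mul_comm, Ideal.Quotient.mk_eq_mk_iff_sub_mem, hQ]
    exact Ideal.subset_span (by simp)
  -- part 1 : z * m ⊆ m ^ 3
  have h1 : ∀ f ∈ m, z * f ∈ m ^ 3 := by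
    intro f hf
    rw [hm] at hf
    induction hf using Submodule.span_induction with
    | mem g hg =>
      rcases hg with rfl | rfl | rfl
      · rw [hzx]; exact Ideal.pow_mem_pow hum 3
      · rw [hzz]; exact Ideal.zero_mem _
      · rw [hzu]; exact Ideal.zero_mem _
    | zero => rw [mul_zero]; exact Ideal.zero_mem _
    | add a b _ _ ha hb => rw [mul_add]; exact Ideal.add_mem _ ha hb
    | smul r a _ ha =>
      rw [smul_eq_mul, mul_left_comm]
      exact Ideal.mul_mem_left _ _ ha
  -- m as map of an ideal of the power series ring
  have hmmap : m = Ideal.map (Ideal.Quotient.mk Q) (Ideal.span {X, Z, U}) := by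
    rw [hm, Ideal.map_span, Set.image_insert_eq, Set.image_insert_eq, Set.image_singleton,
      ← hx, ← hz, ← hu]
  have hXker : constantCoeff X = 0 := by rw [hX, constantCoeff_X]
  have hZker : constantCoeff Z = 0 := by rw [hZ, constantCoeff_X]
  have hUker : constantCoeff U = 0 := by rw [hU, constantCoeff_X]
  -- part 2 : z ∉ m ^ 2
  have h2 : z ∉ m ^ 2 := by
    intro hmem
    rw [hmmap, ← Ideal.map_pow, hz, Ideal.mem_quotient_iff_mem_sup] at hmem
    have hle : Ideal.span {X, Z, U} ^ 2 ⊔ Q ≤ Jideal F := by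
      apply sup_le
      · rw [pow_two, Ideal.mul_le]
        intro a ha b hb
        have hker : ∀ c ∈ Ideal.span {X, Z, U}, constantCoeff c = 0 := by
          intro c hc
          have : Ideal.span {X, Z, U} ≤ RingHom.ker (constantCoeff (σ := Fin 3) (R := F)) := by
            rw [Ideal.span_le]
            rintro g (rfl | rfl | rfl) <;>
              simp [RingHom.mem_ker, hXker, hZker, hUker]
          exact this hc
        exact mul_mem_Jideal F (hker a ha) (hker b hb)
      · rw [hQ, Ideal.span_le]
        rintro g (rfl | rfl | rfl)
        · rw [pow_two]; exact mul_mem_Jideal F hZker hZker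
        · exact mul_mem_Jideal F hZker hUker
        · refine Submodule.sub_mem _ (mul_mem_Jideal F hXker hZker) ?_
          rw [show (U : MvPowerSeries (Fin 3) F) ^ 3 = U * U ^ 2 by ring]
          exact mul_mem_Jideal F hUker (by rw [map_pow, hUker]; ring)
    have hJ := hle hmem
    have : coeff (Finsupp.single 1 1) Z = 0 := hJ.2
    rw [hZ, coeff_X, if_pos rfl] at this
    exact one_ne_zero this
  -- part 3 : z ∈ rrPow m 2
  have h3 : z ∈ rrPow m 2 := by
    have hcol : z ∈ (m ^ (2 + 1)).colon ((m ^ 1 : Ideal _) : Set _) := by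
      rw [Submodule.mem_colon]
      intro p hp
      rw [smul_eq_mul]
      exact h1 p (by rwa [pow_one] at hp)
    unfold rrPow
    exact le_iSup (fun k : ℕ => (m ^ (2 + k)).colon ((m ^ k : Ideal (MvPowerSeries (Fin 3) F ⧸ Q)) : Set (MvPowerSeries (Fin 3) F ⧸ Q))) 1 hcol
  refine ⟨h1, h2, h3, fun heq => h2 (heq ▸ h3), ?_⟩
  -- part 5 : rrPow m 1 = m
  refine le_antisymm (iSup_le ?_) ?_
  · intro k
    intro r hr
    by_contra hrm
    obtain ⟨f, rfl⟩ := Ideal.Quotient.mk_surjective r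
    by_cases hc : constantCoeff f = 0
    · refine hrm ?_
      rw [hmmap]
      refine Ideal.mem_map_of_mem _ ?_
      rw [hX, hZ, hU]
      exact mem_span_X_of_constantCoeff_eq_zero F hc
    · -- `f` is a unit, so `m ^ k ≤ m ^ (1 + k)`
      have hunit : IsUnit (Ideal.Quotient.mk Q f) :=
        (isUnit_iff_constantCoeff.mpr (isUnit_iff_ne_zero.mpr hc)).map _
      obtain ⟨w, hw⟩ := hunit.exists_left_inv
      have hstep : m ^ k ≤ m ^ (1 + k) := by
        intro s hs
        have hin : Ideal.Quotient.mk Q f * s ∈ m ^ (1 + k) := by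
          have := Submodule.mem_colon.mp hr s hs
          rwa [smul_eq_mul] at this
        have : s = w * (Ideal.Quotient.mk Q f * s) := by
          rw [← mul_assoc, hw, one_mul]
        rw [this]
        exact Ideal.mul_mem_left _ _ hin
      -- hence `x ^ k ∈ m ^ (1 + k)`, contradiction
      have hxk : x ^ k ∈ m ^ (1 + k) := hstep (Ideal.pow_mem_pow hxm k)
      rw [hmmap, ← Ideal.map_pow, hx, ← map_pow, Ideal.mem_quotient_iff_mem_sup] at hxk
      have hmaple : Ideal.map (psi F) (Ideal.span {X, Z, U} ^ (1 + k) ⊔ Q) ≤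
          Ideal.span {(MvPowerSeries.X 0 : MvPowerSeries (Fin 3) F) ^ (1 + k)} := by
        rw [Ideal.map_sup, Ideal.map_pow]
        apply sup_le
        · rw [← Ideal.span_singleton_pow]
          refine Ideal.pow_right_mono ?_ (1 + k)
          rw [Ideal.map_span, Ideal.span_le]
          rintro g ⟨a, (rfl | rfl | rfl), rfl⟩
          · rw [hX, psi_X0]; exact Ideal.subset_span rfl
          · rw [hZ, psi_X1]; exact Ideal.zero_mem _
          · rw [hU, psi_X2]; exact Ideal.zero_mem _
        · rw [hQ, Ideal.map_span, Ideal.span_le]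
          rintro g ⟨a, (rfl | rfl | rfl), rfl⟩
          · rw [map_pow, hZ, psi_X1, zero_pow two_ne_zero]; exact Ideal.zero_mem _
          · rw [map_mul, hZ, psi_X1, zero_mul]; exact Ideal.zero_mem _
          · rw [map_sub, map_mul, map_pow, hX, hZ, hU, psi_X0, psi_X1, psi_X2,
              mul_zero, zero_pow three_ne_zero, sub_zero]
            exact Ideal.zero_mem _
      have hXk : (MvPowerSeries.X 0 : MvPowerSeries (Fin 3) F) ^ k ∈
          Ideal.span {(MvPowerSeries.X 0 : MvPowerSeries (Fin 3) F) ^ (1 + k)} := by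
        have h' := hmaple (Ideal.mem_map_of_mem (psi F) hxk)
        rwa [map_pow, hX, psi_X0] at h'
      have hdvd : (MvPowerSeries.X 0 : MvPowerSeries (Fin 3) F) ^ (1 + k) ∣
          (MvPowerSeries.X 0 : MvPowerSeries (Fin 3) F) ^ k :=
        Ideal.mem_span_singleton.mp hXk
      have hcoeff := (X_pow_dvd_iff.mp hdvd) (Finsupp.single 0 k) (by simp)
      rw [coeff_X_pow, if_pos rfl] at hcoeff
      exact one_ne_zero hcoeff
  · -- m ≤ rrPow m 1
    refine le_trans ?_ (le_iSup (fun k : ℕ => (m ^ (1 + k)).colon ((m ^ k : Ideal (MvPowerSeries (Fin 3) F ⧸ Q)) : Set (MvPowerSeries (Fin 3) F ⧸ Q))) 0)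
    intro r hr
    rw [Submodule.mem_colon]
    intro p _
    rw [smul_eq_mul]
    show r * p ∈ m ^ 1
    exact (show m ≤ m ^ 1 from (pow_one m).ge) (Ideal.mul_mem_right _ _ hr)
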